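/- arXiv:1411.6360 — 2 statements merged into one kernel-verified Lean document; each statement's English description precedes it below -/
import Mathlib

section
/- Let A be a 2×2 integer matrix with det A = 1 and trace A > 2, with eigenvalues α > 1 > β = 1/α > 0, and let Γ_A = ℤ² ⋊_A ℤ with fully invariant subgroup H = ⟨a₁, a₂⟩ ≅ ℤ². Define θ: Γ_A → Γ_A by θ(a_i) = a^{A e_i} = τ a_i τ⁻¹ for i = 1, 2 and θ(τ) = τ. Then θ is an endomorphism, GR(θ) = 1, while the restriction θ' = θ|_H has GR(θ') = sp(A) = α > 1. In particular GR(θ) < max{GR(θ'), GR(θ̂)}, where θ̂ is the (identity) induced endomorphism of Γ_A/H ≅ ℤ. -/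
open Filter Topology

/-- Word length of `g` with respect to the (symmetrized) generating set `S`. -/
noncomputable def wordLength {G : Type*} [Group G] (S : Set G) (g : G) : ℕ :=
  sInf {n : ℕ | ∃ w : List G, w.length = n ∧ (∀ x ∈ w, x ∈ S ∨ x⁻¹ ∈ S) ∧ w.prod = g}

/-- `L_k(f, S) = max_{s ∈ S} L(f^k(s), S)`. -/
noncomputable def Lk {G : Type*} [Group G] (S : Finset G) (f : G → G) (k : ℕ) : ℕ :=
  S.sup fun s => wordLength (S : Set G) (f^[k] s)

/-- The growth rate `GR(f) = inf_{k ≥ 1} L_k(f,S)^{1/k}` (which equals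
`lim_{k→∞} L_k(f,S)^{1/k}`). -/
noncomputable def GR {G : Type*} [Group G] (S : Finset G) (f : G → G) : ℝ :=
  ⨅ k : ℕ+, (Lk S f k : ℝ) ^ (((k : ℕ) : ℝ))⁻¹

/-- `f` is eventually trivial if some iterate is the trivial endomorphism. -/
def EventuallyTrivial {G : Type*} [Group G] (f : G → G) : Prop :=
  ∃ N : ℕ, 0 < N ∧ ∀ g, f^[N] g = 1

/-- The relations of the lattice `Γ_A = ℤ² ⋊_A ℤ =
⟨a₁, a₂, τ | [a₁,a₂] = 1, τ aᵢ τ⁻¹ = a₁^{ℓ_{1i}} a₂^{ℓ_{2i}}⟩` of `Sol`, where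
`a₁, a₂, τ` are the generators `0, 1, 2` and `A = (ℓ_{ij})`. -/
def solRels (A : Matrix (Fin 2) (Fin 2) ℤ) : Set (FreeGroup (Fin 3)) :=
  { FreeGroup.of 0 * FreeGroup.of 1 * (FreeGroup.of 0)⁻¹ * (FreeGroup.of 1)⁻¹,
    FreeGroup.of 2 * FreeGroup.of 0 * (FreeGroup.of 2)⁻¹ *
      (FreeGroup.of 0 ^ A 0 0 * FreeGroup.of 1 ^ A 1 0)⁻¹,
    FreeGroup.of 2 * FreeGroup.of 1 * (FreeGroup.of 2)⁻¹ *
      (FreeGroup.of 0 ^ A 0 1 * FreeGroup.of 1 ^ A 1 1)⁻¹ }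

/-- The lattice `Γ_A = ℤ² ⋊_A ℤ` of `Sol` determined by the integer matrix `A`. -/
abbrev SolLattice (A : Matrix (Fin 2) (Fin 2) ℤ) := PresentedGroup (solRels A)

/-- The generator `a₁` of `Γ_A`. -/
def solA1 (A : Matrix (Fin 2) (Fin 2) ℤ) : SolLattice A := PresentedGroup.of 0
/-- The generator `a₂` of `Γ_A`. -/
def solA2 (A : Matrix (Fin 2) (Fin 2) ℤ) : SolLattice A := PresentedGroup.of 1
/-- The generator `τ` of `Γ_A`. -/
def solTau (A : Matrix (Fin 2) (Fin 2) ℤ) : SolLattice A := PresentedGroup.of 2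

/-- The subgroup `H = ⟨a₁, a₂⟩ ≅ ℤ²` of `Γ_A`. -/
def solH (A : Matrix (Fin 2) (Fin 2) ℤ) : Subgroup (SolLattice A) :=
  Subgroup.closure {solA1 A, solA2 A}


section WL
variable {G : Type*} [Group G] {S : Set G}

lemma exists_word (hS : Subgroup.closure S = ⊤) (g : G) :
    ∃ w : List G, (∀ x ∈ w, x ∈ S ∨ x⁻¹ ∈ S) ∧ w.prod = g := by
  have hg : g ∈ Subgroup.closure S := hS ▸ Subgroup.mem_top g
  induction hg using Subgroup.closure_induction with
  | mem x hx => exact ⟨[x], by simp [hx]⟩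
  | one => exact ⟨[], by simp⟩
  | mul x y _ _ ihx ihy =>
    obtain ⟨w1, h1, e1⟩ := ihx; obtain ⟨w2, h2, e2⟩ := ihy
    exact ⟨w1 ++ w2, by intro x hx; rcases List.mem_append.1 hx with h|h; exacts [h1 x h, h2 x h],
      by simp [e1, e2]⟩
  | inv x _ ihx =>
    obtain ⟨w, h1, e1⟩ := ihx
    refine ⟨(w.map Inv.inv).reverse, ?_, ?_⟩
    · intro x hx
      simp only [List.mem_reverse, List.mem_map] at hx
      obtain ⟨y, hy, rfl⟩ := hx
      rcases h1 y hy with h|h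
      · exact Or.inr (by simpa using h)
      · exact Or.inl h
    · rw [← List.prod_inv_reverse, e1]

lemma wordLength_le {g : G} {n : ℕ} (w : List G) (hlen : w.length = n)
    (hw : ∀ x ∈ w, x ∈ S ∨ x⁻¹ ∈ S) (hp : w.prod = g) : wordLength S g ≤ n :=
  Nat.sInf_le ⟨w, hlen, hw, hp⟩

lemma exists_word_length (hS : Subgroup.closure S = ⊤) (g : G) :
    ∃ w : List G, w.length = wordLength S g ∧ (∀ x ∈ w, x ∈ S ∨ x⁻¹ ∈ S) ∧ w.prod = g := by
  have hne : {n : ℕ | ∃ w : List G, w.length = n ∧ (∀ x ∈ w, x ∈ S ∨ x⁻¹ ∈ S) ∧ w.prod = g}.Nonempty := by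
    obtain ⟨w, hw, hp⟩ := exists_word hS g
    exact ⟨w.length, w, rfl, hw, hp⟩
  exact Nat.sInf_mem hne

lemma wordLength_mul_le (hS : Subgroup.closure S = ⊤) (g h : G) :
    wordLength S (g * h) ≤ wordLength S g + wordLength S h := by
  obtain ⟨w1, l1, h1, p1⟩ := exists_word_length hS g
  obtain ⟨w2, l2, h2, p2⟩ := exists_word_length hS h
  refine wordLength_le (w1 ++ w2) (by simp [l1, l2]) ?_ (by simp [p1, p2])
  intro x hx; rcases List.mem_append.1 hx with h|h; exacts [h1 x h, h2 x h]

lemma wordLength_inv_le (hS : Subgroup.closure S = ⊤) (g : G) :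
    wordLength S g⁻¹ ≤ wordLength S g := by
  obtain ⟨w, l, h1, p1⟩ := exists_word_length hS g
  refine wordLength_le (w.map Inv.inv).reverse (by simp [l]) ?_ ?_
  · intro x hx
    simp only [List.mem_reverse, List.mem_map] at hx
    obtain ⟨y, hy, rfl⟩ := hx
    rcases h1 y hy with h|h
    · exact Or.inr (by simpa using h)
    · exact Or.inl h
  · rw [← List.prod_inv_reverse, p1]

lemma wordLength_le_one {s : G} (hs : s ∈ S) : wordLength S s ≤ 1 :=
  wordLength_le [s] rfl (by simp [hs]) (by simp)

lemma wordLength_pow_le (hS : Subgroup.closure S = ⊤) (g : G) (n : ℕ) :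
    wordLength S (g ^ n) ≤ n * wordLength S g := by
  induction n with
  | zero =>
    have : wordLength S (1 : G) ≤ 0 := wordLength_le [] rfl (by simp) (by simp)
    simpa using this
  | succ n ih =>
    calc wordLength S (g ^ (n+1)) = wordLength S (g ^ n * g) := by rw [pow_succ]
    _ ≤ wordLength S (g ^ n) + wordLength S g := wordLength_mul_le hS _ _
    _ ≤ n * wordLength S g + wordLength S g := by omega
    _ = (n+1) * wordLength S g := by ring

lemma wordLength_zpow_le (hS : Subgroup.closure S = ⊤) (g : G) (m : ℤ) :
    wordLength S (g ^ m) ≤ m.natAbs * wordLength S g := by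
  rcases Int.natAbs_eq m with h|h
  · rw [h, zpow_natCast]; exact wordLength_pow_le hS g _
  · rw [h, zpow_neg, zpow_natCast, Int.natAbs_neg, Int.natAbs_natCast]
    exact le_trans (wordLength_inv_le hS _) (wordLength_pow_le hS g _)

lemma one_le_wordLength (hS : Subgroup.closure S = ⊤) {g : G} (hg : g ≠ 1) :
    1 ≤ wordLength S g := by
  by_contra h
  push_neg at h
  interval_cases h' : wordLength S g
  · obtain ⟨w, l, _, p⟩ := exists_word_length hS g
    rw [h'] at l
    rw [List.length_eq_zero_iff.mp l] at p
    exact hg (by simpa using p.symm)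

lemma abs_hom_le_wordLength (hS : Subgroup.closure S = ⊤) (F : G →* Multiplicative ℝ)
    {M : ℝ} (hM : ∀ s ∈ S, |(F s).toAdd| ≤ M) (g : G) :
    |(F g).toAdd| ≤ (wordLength S g : ℝ) * M := by
  obtain ⟨w, l, hw, p⟩ := exists_word_length hS g
  subst p
  rw [← l]; clear l
  induction w with
  | nil => simp
  | cons a t ih =>
    have ha : |(F a).toAdd| ≤ M := by
      rcases hw a (by simp) with h|h
      · exact hM a h
      · have := hM _ h
        rw [map_inv] at this
        simpa using this
    have ht := ih (fun x hx => hw x (by simp [hx]))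
    calc |(F (a :: t).prod).toAdd| = |(F a).toAdd + (F t.prod).toAdd| := by
          simp [map_mul]
      _ ≤ |(F a).toAdd| + |(F t.prod).toAdd| := abs_add_le _ _
      _ ≤ M + (t.length : ℝ) * M := by gcongr
      _ = ((a :: t).length : ℝ) * M := by simp; ring

end WL

section GRbounds
variable {G : Type*} [Group G] (S : Finset G) (f : G → G)

lemma GR_bddBelow : BddBelow (Set.range fun k : ℕ+ => (Lk S f k : ℝ) ^ (((k : ℕ) : ℝ))⁻¹) := by
  refine ⟨0, ?_⟩
  rintro x ⟨k, rfl⟩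
  exact Real.rpow_nonneg (by positivity) _

lemma le_GR {r : ℝ} (hr : 0 ≤ r) (h : ∀ k : ℕ+, r ^ (k : ℕ) ≤ (Lk S f k : ℝ)) :
    r ≤ GR S f := by
  refine le_ciInf fun k => ?_
  have hk : ((k : ℕ) : ℝ) ≠ 0 := by exact_mod_cast k.ne_zero
  calc r = (r ^ (k : ℕ)) ^ (((k : ℕ) : ℝ))⁻¹ := by
        rw [← Real.rpow_natCast r (k : ℕ), ← Real.rpow_mul hr, mul_inv_cancel₀ hk, Real.rpow_one]
    _ ≤ (Lk S f k : ℝ) ^ (((k : ℕ) : ℝ))⁻¹ :=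
        Real.rpow_le_rpow (by positivity) (h k) (by positivity)

lemma GR_le {r C : ℝ} (hr : 0 < r) (hC : 1 ≤ C)
    (h : ∀ k : ℕ+, (Lk S f k : ℝ) ≤ C * k * r ^ (k : ℕ)) : GR S f ≤ r := by
  have hC0 : (0:ℝ) < C := lt_of_lt_of_le one_pos hC
  have key : ∀ k : ℕ+, GR S f ≤ C ^ (((k:ℕ):ℝ))⁻¹ * ((k:ℕ):ℝ) ^ (((k:ℕ):ℝ))⁻¹ * r := by
    intro k
    have hk : ((k : ℕ) : ℝ) ≠ 0 := by exact_mod_cast k.ne_zero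
    have hkpos : (0:ℝ) < ((k:ℕ):ℝ) := by exact_mod_cast k.pos
    have h1 : GR S f ≤ (Lk S f k : ℝ) ^ (((k : ℕ) : ℝ))⁻¹ := ciInf_le (GR_bddBelow S f) k
    have h2 : (Lk S f k : ℝ) ^ (((k : ℕ) : ℝ))⁻¹ ≤ (C * k * r ^ (k:ℕ)) ^ (((k : ℕ) : ℝ))⁻¹ :=
      Real.rpow_le_rpow (by positivity) (h k) (by positivity)
    have h3 : (C * (k:ℕ) * r ^ (k:ℕ)) ^ (((k : ℕ) : ℝ))⁻¹
        = C ^ (((k:ℕ):ℝ))⁻¹ * ((k:ℕ):ℝ) ^ (((k:ℕ):ℝ))⁻¹ * r := by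
      rw [Real.mul_rpow (by positivity) (by positivity),
          Real.mul_rpow (by positivity) (by positivity)]
      congr 1
      rw [← Real.rpow_natCast r (k:ℕ), ← Real.rpow_mul hr.le, mul_inv_cancel₀ hk, Real.rpow_one]
    exact h1.trans (h2.trans_eq h3)
  have hinv : Tendsto (fun k : ℕ => (((k:ℕ):ℝ))⁻¹) atTop (𝓝 0) :=
    tendsto_inv_atTop_zero.comp tendsto_natCast_atTop_atTop
  have t1 : Tendsto (fun k : ℕ => C ^ (((k:ℕ):ℝ))⁻¹) atTop (𝓝 1) := by
    have := (tendsto_const_nhds (x := C) (f := atTop (α := ℕ))).rpow hinv (Or.inl hC0.ne')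
    simpa using this
  have t2 : Tendsto (fun k : ℕ => ((k:ℕ):ℝ) ^ (((k:ℕ):ℝ))⁻¹) atTop (𝓝 1) := by
    have := tendsto_rpow_div.comp (tendsto_natCast_atTop_atTop (R := ℝ))
    simpa [Function.comp_def, one_div] using this
  have t3 : Tendsto (fun k : ℕ => C ^ (((k:ℕ):ℝ))⁻¹ * ((k:ℕ):ℝ) ^ (((k:ℕ):ℝ))⁻¹ * r)
      atTop (𝓝 r) := by
    have := (t1.mul t2).mul_const r
    simpa using this
  refine ge_of_tendsto t3 ?_
  filter_upwards [eventually_ge_atTop 1] with k hk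
  exact key ⟨k, hk⟩
end GRbounds

def mulByAut (u : ℝˣ) : MulAut (Multiplicative ℝ) where
  toFun x := Multiplicative.ofAdd ((u : ℝ) * x.toAdd)
  invFun x := Multiplicative.ofAdd (((u⁻¹ : ℝˣ) : ℝ) * x.toAdd)
  left_inv x := by simp [← mul_assoc]
  right_inv x := by simp [← mul_assoc]
  map_mul' x y := by simp [mul_add]

def phiHom (lam : ℝˣ) : Multiplicative ℤ →* MulAut (Multiplicative ℝ) where
  toFun n := mulByAut (lam ^ n.toAdd)
  map_one' := by ext x; simp [mulByAut]
  map_mul' n m := by ext x; simp [mulByAut, zpow_add, mul_assoc]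

abbrev AffG (lam : ℝˣ) := Multiplicative ℝ ⋊[phiHom lam] Multiplicative ℤ

lemma phiHom_apply (lam : ℝˣ) (n : Multiplicative ℤ) (x : Multiplicative ℝ) :
    ((phiHom lam n) x).toAdd = ((lam : ℝ) ^ n.toAdd) * x.toAdd := by
  simp [phiHom, mulByAut, Units.val_zpow_eq_zpow_val]

open SemidirectProduct in
/-- The map on generators defining `χ_λ : Γ_A → ℝ ⋊ ℤ`. -/
noncomputable def solGen (A : Matrix (Fin 2) (Fin 2) ℤ) (lam : ℝˣ) : Fin 3 → AffG lam :=
  ![inl (Multiplicative.ofAdd ((A 1 0 : ℝ))),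
    inl (Multiplicative.ofAdd ((lam : ℝ) - (A 0 0 : ℝ))),
    inr (Multiplicative.ofAdd (1 : ℤ))]

open SemidirectProduct in
lemma aff_rel1 (lam : ℝˣ) (x y : Multiplicative ℝ) :
    (inl x : AffG lam) * inl y * (inl x)⁻¹ * (inl y)⁻¹ = 1 := by
  rw [← map_inv, ← map_inv, ← map_mul, ← map_mul, ← map_mul, mul_comm x y]
  rw [show y * x * x⁻¹ * y⁻¹ = 1 by group, map_one]

open SemidirectProduct in
lemma aff_rel2 (lam : ℝˣ) (z x y : Multiplicative ℝ) (m n : ℤ)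
    (h : phiHom lam (Multiplicative.ofAdd 1) z = x ^ m * y ^ n) :
    (inr (Multiplicative.ofAdd 1) : AffG lam) * inl z * (inr (Multiplicative.ofAdd 1))⁻¹ *
      ((inl x) ^ m * (inl y) ^ n)⁻¹ = 1 := by
  rw [← map_zpow, ← map_zpow, ← map_mul, ← h, ← map_inv, inl_aut, map_inv]
  group

open SemidirectProduct in
lemma solGen_rels (A : Matrix (Fin 2) (Fin 2) ℤ) (lam : ℝˣ)
    (hq : (lam:ℝ) * ((lam:ℝ) - (A 0 0 : ℝ)) =
      (A 0 1 : ℝ) * (A 1 0 : ℝ) + (A 1 1 : ℝ) * ((lam:ℝ) - (A 0 0 : ℝ))) :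
    ∀ r ∈ solRels A, FreeGroup.lift (solGen A lam) r = 1 := by
  have heq : ∀ (m n : ℤ) (z x y : ℝ), (lam:ℝ) * z = (m:ℝ) * x + (n:ℝ) * y →
      phiHom lam (Multiplicative.ofAdd 1) (Multiplicative.ofAdd z)
        = (Multiplicative.ofAdd x) ^ m * (Multiplicative.ofAdd y) ^ n := by
    intro m n z x y hmn
    apply Multiplicative.toAdd.injective
    rw [phiHom_apply, toAdd_mul, toAdd_zpow, toAdd_zpow]
    simp only [toAdd_ofAdd, zpow_one, zsmul_eq_mul]
    simpa using hmn
  rintro r (rfl | rfl | rfl)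
  · simp only [map_mul, map_inv, FreeGroup.lift_apply_of, solGen,
      Matrix.cons_val_zero, Matrix.cons_val_one, Matrix.head_cons]
    exact aff_rel1 lam _ _
  · simp only [map_mul, map_inv, map_zpow, FreeGroup.lift_apply_of, solGen,
      Matrix.cons_val_zero, Matrix.cons_val_one, Matrix.head_cons, Matrix.cons_val_two,
      Matrix.tail_cons]
    exact aff_rel2 lam (Multiplicative.ofAdd ((A 1 0 : ℝ))) (Multiplicative.ofAdd ((A 1 0 : ℝ)))
      (Multiplicative.ofAdd ((lam:ℝ) - (A 0 0 : ℝ))) (A 0 0) (A 1 0)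
      (heq (A 0 0) (A 1 0) _ _ _ (by push_cast; ring))
  · simp only [map_mul, map_inv, map_zpow, FreeGroup.lift_apply_of, solGen,
      Matrix.cons_val_zero, Matrix.cons_val_one, Matrix.head_cons, Matrix.cons_val_two,
      Matrix.tail_cons]
    exact aff_rel2 lam (Multiplicative.ofAdd ((lam:ℝ) - (A 0 0 : ℝ)))
      (Multiplicative.ofAdd ((A 1 0 : ℝ))) (Multiplicative.ofAdd ((lam:ℝ) - (A 0 0 : ℝ)))
      (A 0 1) (A 1 1)
      (heq (A 0 1) (A 1 1) _ _ _ (by push_cast; linarith [hq]))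

/-- The homomorphism `χ_λ : Γ_A → ℝ ⋊ ℤ`. -/
noncomputable def solChi (A : Matrix (Fin 2) (Fin 2) ℤ) (lam : ℝˣ)
    (hq : (lam:ℝ) * ((lam:ℝ) - (A 0 0 : ℝ)) =
      (A 0 1 : ℝ) * (A 1 0 : ℝ) + (A 1 1 : ℝ) * ((lam:ℝ) - (A 0 0 : ℝ))) :
    SolLattice A →* AffG lam :=
  PresentedGroup.toGroup (solGen_rels A lam hq)

open SemidirectProduct in
@[simp] lemma solChi_a1 (A : Matrix (Fin 2) (Fin 2) ℤ) (lam : ℝˣ) (hq) :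
    solChi A lam hq (solA1 A) = inl (Multiplicative.ofAdd ((A 1 0 : ℝ))) :=
  PresentedGroup.toGroup.of _

open SemidirectProduct in
@[simp] lemma solChi_a2 (A : Matrix (Fin 2) (Fin 2) ℤ) (lam : ℝˣ) (hq) :
    solChi A lam hq (solA2 A) = inl (Multiplicative.ofAdd ((lam:ℝ) - (A 0 0 : ℝ))) :=
  PresentedGroup.toGroup.of _

open SemidirectProduct in
@[simp] lemma solChi_tau (A : Matrix (Fin 2) (Fin 2) ℤ) (lam : ℝˣ) (hq) :
    solChi A lam hq (solTau A) = inr (Multiplicative.ofAdd (1 : ℤ)) :=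
  PresentedGroup.toGroup.of _

namespace SolAux
open SemidirectProduct

variable (A : Matrix (Fin 2) (Fin 2) ℤ) (lam : ℝˣ)
  (hq : (lam:ℝ) * ((lam:ℝ) - (A 0 0 : ℝ)) =
    (A 0 1 : ℝ) * (A 1 0 : ℝ) + (A 1 1 : ℝ) * ((lam:ℝ) - (A 0 0 : ℝ)))

/-- The additive "eigenfunctional" `ν_λ` on `Γ_A`. -/
noncomputable def nu (g : SolLattice A) : ℝ := ((solChi A lam hq g).left).toAdd

lemma chi_right_mem_solH {g : SolLattice A} (hg : g ∈ solH A) :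
    (solChi A lam hq g).right = 1 := by
  have : solH A ≤ (rightHom.comp (solChi A lam hq)).ker := by
    rw [solH, Subgroup.closure_le]
    rintro x (rfl | rfl) <;>
      simp only [SetLike.mem_coe, MonoidHom.mem_ker, MonoidHom.comp_apply, solChi_a1, solChi_a2,
        rightHom_eq_right, right_inl]
  simpa [MonoidHom.mem_ker] using this hg

lemma nu_mul {g h : SolLattice A} (hg : (solChi A lam hq g).right = 1) :
    nu A lam hq (g * h) = nu A lam hq g + nu A lam hq h := by
  unfold nu
  rw [map_mul, SemidirectProduct.mul_left, hg, map_one, MulAut.one_apply, toAdd_mul]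

lemma nu_one : nu A lam hq 1 = 0 := by unfold nu; rw [map_one]; rfl

lemma nu_inv {g : SolLattice A} (hg : (solChi A lam hq g).right = 1) :
    nu A lam hq g⁻¹ = - nu A lam hq g := by
  have h := nu_mul A lam hq (g := g) (h := g⁻¹) hg
  rw [mul_inv_cancel, nu_one] at h
  linarith

lemma nu_conj (g : SolLattice A) :
    nu A lam hq (solTau A * g * (solTau A)⁻¹) = (lam : ℝ) * nu A lam hq g := by
  unfold nu
  rw [map_mul, map_mul, map_inv, solChi_tau]
  rw [SemidirectProduct.mul_left, SemidirectProduct.mul_left]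
  simp only [left_inr, right_inr, inv_left, inv_right, map_one, one_mul, map_inv]
  rw [inv_one, mul_one, phiHom_apply]
  simp

lemma nu_a1 : nu A lam hq (solA1 A) = (A 1 0 : ℝ) := by
  unfold nu; rw [solChi_a1]; simp

lemma nu_a2 : nu A lam hq (solA2 A) = (lam : ℝ) - (A 0 0 : ℝ) := by
  unfold nu; rw [solChi_a2, left_inl, toAdd_ofAdd]

lemma nu_zpow_prod (m n : ℤ) :
    nu A lam hq (solA1 A ^ m * solA2 A ^ n)
      = m * (A 1 0 : ℝ) + n * ((lam:ℝ) - (A 0 0 : ℝ)) := by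
  unfold nu
  rw [map_mul, map_zpow, map_zpow, solChi_a1, solChi_a2]
  rw [← map_zpow (inl : Multiplicative ℝ →* AffG lam),
      ← map_zpow (inl : Multiplicative ℝ →* AffG lam),
      ← map_mul (inl : Multiplicative ℝ →* AffG lam), left_inl, toAdd_mul, toAdd_zpow, toAdd_zpow]
  simp [zsmul_eq_mul]

include lam hq in
lemma tau_ne_one : solTau A ≠ 1 := by
  intro h
  have h2 := congrArg (fun g => (solChi A lam hq g).right) h
  simp only [solChi_tau, right_inr, map_one] at h2
  have h3 : (Multiplicative.ofAdd (1:ℤ)).toAdd = ((1 : Multiplicative ℤ)).toAdd :=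
    congrArg Multiplicative.toAdd h2
  simp only [toAdd_ofAdd, toAdd_one] at h3
  omega

/-- `ν_λ` as a homomorphism on `H`. -/
noncomputable def nuH : solH A →* Multiplicative ℝ where
  toFun h := Multiplicative.ofAdd (nu A lam hq (h : SolLattice A))
  map_one' := by simp [nu_one]
  map_mul' x y := by
    rw [← ofAdd_add]
    congr 1
    exact nu_mul A lam hq (chi_right_mem_solH A lam hq x.2)

lemma toAdd_nuH (h : solH A) : (nuH A lam hq h).toAdd = nu A lam hq (h : SolLattice A) := rfl

lemma commute_a12 : Commute (solA1 A) (solA2 A) := by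
  have hr : (FreeGroup.of 0 * FreeGroup.of 1 * (FreeGroup.of 0)⁻¹ * (FreeGroup.of 1)⁻¹ :
      FreeGroup (Fin 3)) ∈ solRels A := by left; rfl
  have h1 : PresentedGroup.mk (solRels A)
      (FreeGroup.of 0 * FreeGroup.of 1 * (FreeGroup.of 0)⁻¹ * (FreeGroup.of 1)⁻¹) = 1 :=
    (QuotientGroup.eq_one_iff _).mpr (Subgroup.subset_normalClosure hr)
  rw [map_mul, map_mul, map_mul, map_inv, map_inv] at h1
  have : solA1 A * solA2 A * (solA1 A)⁻¹ * (solA2 A)⁻¹ = 1 := h1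
  have h2 : solA1 A * solA2 A = solA2 A * solA1 A := by
    rw [← mul_inv_eq_one]
    group
    group at this
    convert this using 1
  exact h2

lemma mem_solH_repr {g : SolLattice A} (hg : g ∈ solH A) :
    ∃ m n : ℤ, g = solA1 A ^ m * solA2 A ^ n := by
  induction hg using Subgroup.closure_induction with
  | mem x hx =>
    rcases hx with rfl | rfl
    · exact ⟨1, 0, by simp⟩
    · exact ⟨0, 1, by simp⟩
  | one => exact ⟨0, 0, by simp⟩
  | mul x y _ _ ihx ihy =>
    obtain ⟨m, n, rfl⟩ := ihx
    obtain ⟨m', n', rfl⟩ := ihy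
    refine ⟨m + m', n + n', ?_⟩
    have hc : Commute (solA2 A ^ n) (solA1 A ^ m') := ((commute_a12 A).symm.zpow_zpow n m')
    rw [zpow_add, zpow_add]
    calc solA1 A ^ m * solA2 A ^ n * (solA1 A ^ m' * solA2 A ^ n')
        = solA1 A ^ m * (solA2 A ^ n * solA1 A ^ m') * solA2 A ^ n' := by group
      _ = solA1 A ^ m * (solA1 A ^ m' * solA2 A ^ n) * solA2 A ^ n' := by rw [hc.eq]
      _ = solA1 A ^ m * solA1 A ^ m' * (solA2 A ^ n * solA2 A ^ n') := by group
  | inv x _ ihx =>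
    obtain ⟨m, n, rfl⟩ := ihx
    refine ⟨-m, -n, ?_⟩
    rw [mul_inv_rev, zpow_neg, zpow_neg]
    exact (((commute_a12 A).zpow_zpow m n).inv_inv.symm.eq)

end SolAux

set_option maxHeartbeats 1000000 in
/-- For a lattice `Γ_A` of `Sol`, the assignment `θ(aᵢ) = τ aᵢ τ⁻¹`,
`θ(τ) = τ` defines an endomorphism `θ` of `Γ_A`, with `GR(θ) = 1` while the restriction
`θ'` to `H = ⟨a₁,a₂⟩` has `GR(θ') = sp(A) = α > 1`; in particular
`GR(θ) < max{GR(θ'), GR(θ̂)}`, where `θ̂` is the induced endomorphism of `Γ_A/H ≅ ℤ`. -/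
theorem GR_solLattice_counterexample (A : Matrix (Fin 2) (Fin 2) ℤ)
    (hdet : A.det = 1) (htr : 2 < A.trace)
    (α : ℝ) (hα1 : 1 < α) (hαA : α + α⁻¹ = (A.trace : ℝ))
    (hHN : (solH A).Normal) :
    (∃ θ : SolLattice A →* SolLattice A,
      θ (solA1 A) = solTau A * solA1 A * (solTau A)⁻¹ ∧
      θ (solA2 A) = solTau A * solA2 A * (solTau A)⁻¹ ∧
      θ (solTau A) = solTau A) ∧
    (∀ θ : SolLattice A →* SolLattice A,
      θ (solA1 A) = solTau A * solA1 A * (solTau A)⁻¹ →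
      θ (solA2 A) = solTau A * solA2 A * (solTau A)⁻¹ →
      θ (solTau A) = solTau A →
      (∀ g ∈ solH A, θ g ∈ solH A) ∧
      (∀ S : Finset (SolLattice A), Subgroup.closure (S : Set (SolLattice A)) = ⊤ →
        GR S ⇑θ = 1 ∧
        (∀ f' : solH A → solH A, (∀ x : solH A, (f' x : SolLattice A) = θ x) →
          ∀ S' : Finset (solH A), Subgroup.closure (S' : Set (solH A)) = ⊤ →
            GR S' f' = α ∧
            (∀ ψ : SolLattice A ⧸ solH A →* SolLattice A ⧸ solH A,
              (∀ g : SolLattice A, ψ (QuotientGroup.mk g) = QuotientGroup.mk (θ g)) →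
              ∀ T : Finset (SolLattice A ⧸ solH A),
                Subgroup.closure (T : Set (SolLattice A ⧸ solH A)) = ⊤ →
                GR S ⇑θ < max (GR S' f') (GR T ⇑ψ))))) := by
  -- ## basic real/integer arithmetic
  have hα0 : (0:ℝ) < α := lt_trans one_pos hα1
  have hαne : α ≠ 0 := ne_of_gt hα0
  have htR : (A.trace : ℝ) = (A 0 0 : ℝ) + (A 1 1 : ℝ) := by
    rw [Matrix.trace_fin_two]; push_cast; ring
  have hdetR : (A 0 0 : ℝ) * (A 1 1 : ℝ) - (A 0 1 : ℝ) * (A 1 0 : ℝ) = 1 := by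
    have h := congrArg (fun z : ℤ => (z : ℝ)) hdet
    rw [Matrix.det_fin_two] at h
    push_cast at h
    linarith
  have hquadα : α * α - ((A 0 0 : ℝ) + (A 1 1 : ℝ)) * α + 1 = 0 := by
    rw [htR] at hαA
    have h1 : α * (α + α⁻¹) = α * ((A 0 0 : ℝ) + (A 1 1 : ℝ)) := by rw [hαA]
    rw [mul_add, mul_inv_cancel₀ hαne] at h1
    linarith
  set β : ℝ := α⁻¹ with hβdef
  have hβ0 : 0 < β := inv_pos.mpr hα0
  have hβ1 : β < 1 := inv_lt_one_of_one_lt₀ hα1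
  have hβne : β ≠ 0 := ne_of_gt hβ0
  have hβeq : β = (A 0 0 : ℝ) + (A 1 1 : ℝ) - α := by
    rw [htR] at hαA; rw [hβdef]; linarith
  have hquadβ : β * β - ((A 0 0 : ℝ) + (A 1 1 : ℝ)) * β + 1 = 0 := by
    rw [hβeq]; linear_combination hquadα
  have hαβ : 0 < α - β := by linarith
  have hc : A 1 0 ≠ 0 := by
    intro h
    rw [Matrix.det_fin_two, h] at hdet
    rw [Matrix.trace_fin_two] at htr
    simp only [mul_zero, sub_zero] at hdet
    rcases Int.eq_one_or_neg_one_of_mul_eq_one' hdet with ⟨h1, h2⟩ | ⟨h1, h2⟩ <;> omega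
  have hcR : (A 1 0 : ℝ) ≠ 0 := Int.cast_ne_zero.mpr hc
  have hcabs : 0 < |(A 1 0 : ℝ)| := abs_pos.mpr hcR
  -- units and eigen-functional hypotheses
  set uα : ℝˣ := Units.mk0 α hαne with huα
  set uβ : ℝˣ := Units.mk0 β hβne with huβ
  have hqα : ((uα:ℝ)) * ((uα:ℝ) - (A 0 0 : ℝ)) =
      (A 0 1 : ℝ) * (A 1 0 : ℝ) + (A 1 1 : ℝ) * ((uα:ℝ) - (A 0 0 : ℝ)) := by
    simp only [huα, Units.val_mk0]
    linear_combination hquadα + hdetR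
  have hqβ : ((uβ:ℝ)) * ((uβ:ℝ) - (A 0 0 : ℝ)) =
      (A 0 1 : ℝ) * (A 1 0 : ℝ) + (A 1 1 : ℝ) * ((uβ:ℝ) - (A 0 0 : ℝ)) := by
    simp only [huβ, Units.val_mk0]
    linear_combination hquadβ + hdetR
  have hτ1 : solTau A ≠ 1 := SolAux.tau_ne_one A uα hqα
  -- ## the conjugation endomorphism
  constructor
  · refine ⟨(MulAut.conj (solTau A)).toMonoidHom, ?_, ?_, ?_⟩ <;>
      simp [MulAut.conj_apply]
  intro θ h1 h2 h3
  have hθ : ∀ g, θ g = solTau A * g * (solTau A)⁻¹ := by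
    have hext : θ = (MulAut.conj (solTau A)).toMonoidHom := by
      apply PresentedGroup.ext
      intro x
      fin_cases x
      · show θ (solA1 A) = (MulAut.conj (solTau A)).toMonoidHom (solA1 A)
        rw [h1]
        simp [MulAut.conj_apply]
      · show θ (solA2 A) = (MulAut.conj (solTau A)).toMonoidHom (solA2 A)
        rw [h2]
        simp [MulAut.conj_apply]
      · show θ (solTau A) = (MulAut.conj (solTau A)).toMonoidHom (solTau A)
        rw [h3]
        simp [MulAut.conj_apply]
    intro g; rw [hext]; simp [MulAut.conj_apply]
  refine ⟨fun g hg => by rw [hθ g]; exact hHN.conj_mem g hg (solTau A), ?_⟩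
  intro S hS
  have hiter : ∀ (k : ℕ) (g : SolLattice A),
      θ^[k] g = (solTau A)^k * g * ((solTau A)^k)⁻¹ := by
    intro k
    induction k with
    | zero => intro g; simp
    | succ k ih =>
      intro g
      rw [Function.iterate_succ_apply', ih, hθ]
      rw [pow_succ]
      group
  -- ## GR(θ) = 1
  have hGRθ : GR S ⇑θ = 1 := by
    have hup : GR S ⇑θ ≤ 1 := by
      set Tn : ℕ := wordLength (S : Set (SolLattice A)) (solTau A) with hTn
      refine GR_le S ⇑θ one_pos (C := ((2*Tn+1 : ℕ) : ℝ)) (by exact_mod_cast Nat.le_add_left 1 _) ?_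
      intro k
      have hnat : Lk S ⇑θ k ≤ (2*Tn+1) * k := by
        apply Finset.sup_le
        intro s hs
        rw [hiter]
        calc wordLength (S : Set (SolLattice A)) ((solTau A)^(k:ℕ) * s * ((solTau A)^(k:ℕ))⁻¹)
            ≤ wordLength (S : Set (SolLattice A)) ((solTau A)^(k:ℕ) * s)
              + wordLength (S : Set (SolLattice A)) (((solTau A)^(k:ℕ))⁻¹) :=
              wordLength_mul_le hS _ _
          _ ≤ wordLength (S : Set (SolLattice A)) ((solTau A)^(k:ℕ))
              + wordLength (S : Set (SolLattice A)) s
              + wordLength (S : Set (SolLattice A)) ((solTau A)^(k:ℕ)) := by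
              have := wordLength_mul_le hS ((solTau A)^(k:ℕ)) s
              have := wordLength_inv_le hS ((solTau A)^(k:ℕ))
              omega
          _ ≤ (k:ℕ) * Tn + 1 + (k:ℕ) * Tn := by
              have h1 := wordLength_pow_le hS (solTau A) (k:ℕ)
              rw [← hTn] at h1
              have h2 := wordLength_le_one (S := (S : Set (SolLattice A))) (s := s)
                (by exact_mod_cast hs)
              omega
          _ ≤ (2*Tn+1) * (k:ℕ) := by
              have : 1 ≤ (k:ℕ) := k.one_le
              nlinarith
      calc (Lk S ⇑θ (k:ℕ) : ℝ) ≤ (((2*Tn+1) * (k:ℕ) : ℕ) : ℝ) := by exact_mod_cast hnat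
        _ = ((2*Tn+1 : ℕ):ℝ) * (k:ℕ) * 1^(k:ℕ) := by push_cast; ring
    have hlow : (1:ℝ) ≤ GR S ⇑θ := by
      refine le_GR S ⇑θ zero_le_one ?_
      intro k
      obtain ⟨s₀, hs₀S, hs₀ne⟩ : ∃ s₀ ∈ S, s₀ ≠ 1 := by
        by_contra hcon
        push_neg at hcon
        have : (⊤ : Subgroup (SolLattice A)) ≤ ⊥ := by
          rw [← hS]
          rw [Subgroup.closure_le]
          intro x hx
          simp only [SetLike.mem_coe, Subgroup.mem_bot]
          exact hcon x (by exact_mod_cast hx)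
        exact hτ1 (Subgroup.mem_bot.mp (this (Subgroup.mem_top _)))
      have hne1 : θ^[(k:ℕ)] s₀ ≠ 1 := by
        rw [hiter]
        intro h
        exact hs₀ne (conj_eq_one_iff.mp h)
      have h1 : 1 ≤ wordLength (S : Set (SolLattice A)) (θ^[(k:ℕ)] s₀) :=
        one_le_wordLength hS hne1
      have h2 : 1 ≤ Lk S ⇑θ (k:ℕ) := le_trans h1
        (Finset.le_sup (f := fun s => wordLength (S : Set (SolLattice A)) (θ^[(k:ℕ)] s)) hs₀S)
      rw [one_pow]
      exact_mod_cast h2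
    linarith
  refine ⟨hGRθ, ?_⟩
  intro f' hf' S' hS'
  -- ## structure of H
  have hstep : ∀ y : solH A, ((f' y : SolLattice A)) = solTau A * y * (solTau A)⁻¹ := by
    intro y; rw [hf' y, hθ]
  set να : solH A →* Multiplicative ℝ := SolAux.nuH A uα hqα with hνα
  set νβ : solH A →* Multiplicative ℝ := SolAux.nuH A uβ hqβ with hνβ
  have hνα_iter : ∀ (k : ℕ) (x : solH A),
      (να (f'^[k] x)).toAdd = α^k * (να x).toAdd := by
    intro k
    induction k with
    | zero => intro x; simp
    | succ k ih =>
      intro x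
      rw [Function.iterate_succ_apply', SolAux.toAdd_nuH, hstep,
        SolAux.nu_conj, ← SolAux.toAdd_nuH, ih, pow_succ]
      show α * (α ^ k * _) = _
      ring
  have hνβ_iter : ∀ (k : ℕ) (x : solH A),
      (νβ (f'^[k] x)).toAdd = β^k * (νβ x).toAdd := by
    intro k
    induction k with
    | zero => intro x; simp
    | succ k ih =>
      intro x
      rw [Function.iterate_succ_apply', SolAux.toAdd_nuH, hstep,
        SolAux.nu_conj, ← SolAux.toAdd_nuH, ih, pow_succ]
      show β * (β ^ k * _) = _
      ring
  have ha1H : solA1 A ∈ solH A := Subgroup.subset_closure (by left; rfl)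
  have ha2H : solA2 A ∈ solH A := Subgroup.subset_closure (by right; rfl)
  set a1H : solH A := ⟨solA1 A, ha1H⟩ with ha1Hdef
  set a2H : solH A := ⟨solA2 A, ha2H⟩ with ha2Hdef
  have hνα_a1 : (να a1H).toAdd = (A 1 0 : ℝ) := by
    rw [SolAux.toAdd_nuH]; exact SolAux.nu_a1 A uα hqα
  have hνβ_a1 : (νβ a1H).toAdd = (A 1 0 : ℝ) := by
    rw [SolAux.toAdd_nuH]; exact SolAux.nu_a1 A uβ hqβ
  have hS'ne : S'.Nonempty := by
    by_contra hcon
    rw [Finset.not_nonempty_iff_eq_empty] at hcon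
    rw [hcon] at hS'
    simp only [Finset.coe_empty, Subgroup.closure_empty] at hS'
    have : a1H ∈ (⊥ : Subgroup (solH A)) := hS' ▸ Subgroup.mem_top a1H
    rw [Subgroup.mem_bot] at this
    have h0 := hνα_a1
    rw [this, map_one] at h0
    simp only [toAdd_one] at h0
    exact hcR h0.symm
  set Mα : ℝ := S'.sup' hS'ne (fun s => |(να s).toAdd|) with hMαdef
  set Mβ : ℝ := S'.sup' hS'ne (fun s => |(νβ s).toAdd|) with hMβdef
  have hMα_le : ∀ s ∈ S', |(να s).toAdd| ≤ Mα := by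
    intro s hs; rw [hMαdef]; exact Finset.le_sup' (fun s => |(να s).toAdd|) hs
  have hMβ_le : ∀ s ∈ S', |(νβ s).toAdd| ≤ Mβ := by
    intro s hs; rw [hMβdef]; exact Finset.le_sup' (fun s => |(νβ s).toAdd|) hs
  have hMβ0 : 0 ≤ Mβ := by
    obtain ⟨s, hs⟩ := hS'ne
    exact le_trans (abs_nonneg _) (hMβ_le s hs)
  have hMα_pos : 0 < Mα := by
    rcases lt_or_ge 0 Mα with h | h
    · exact h
    · exfalso
      have hall : ∀ s ∈ S', να s = 1 := by
        intro s hs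
        have := le_trans (hMα_le s hs) h
        have h0 : (να s).toAdd = 0 := le_antisymm (le_trans (le_abs_self _) this)
          (by nlinarith [neg_abs_le ((να s).toAdd), abs_nonneg ((να s).toAdd)])
        have := congrArg Multiplicative.ofAdd h0
        simpa using this
      have hker : (⊤ : Subgroup (solH A)) ≤ να.ker := by
        rw [← hS', Subgroup.closure_le]
        intro x hx
        simp only [SetLike.mem_coe, MonoidHom.mem_ker]
        exact hall x (by exact_mod_cast hx)
      have : να a1H = 1 := hker (Subgroup.mem_top a1H)
      rw [this] at hνα_a1
      simp only [toAdd_one] at hνα_a1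
      exact hcR hνα_a1.symm
  -- lower bound : α ≤ GR
  have hGRlow : α ≤ GR S' f' := by
    refine le_GR S' f' hα0.le ?_
    intro k
    obtain ⟨s₀, hs₀S, hs₀eq⟩ := Finset.exists_mem_eq_sup' hS'ne (fun s => |(να s).toAdd|)
    have hb := abs_hom_le_wordLength hS' να
      (M := Mα) (fun s hs => hMα_le s (by exact_mod_cast hs)) (f'^[(k:ℕ)] s₀)
    rw [hνα_iter, abs_mul, abs_of_pos (pow_pos hα0 _), ← hs₀eq, ← hMαdef] at hb
    have hwl : α^(k:ℕ) ≤ (wordLength (S' : Set (solH A)) (f'^[(k:ℕ)] s₀) : ℝ) :=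
      le_of_mul_le_mul_right (by linarith) hMα_pos
    have hLk : wordLength (S' : Set (solH A)) (f'^[(k:ℕ)] s₀) ≤ Lk S' f' (k:ℕ) :=
      Finset.le_sup (f := fun s => wordLength (S' : Set (solH A)) (f'^[(k:ℕ)] s)) hs₀S
    calc α^(k:ℕ) ≤ (wordLength (S' : Set (solH A)) (f'^[(k:ℕ)] s₀) : ℝ) := hwl
      _ ≤ (Lk S' f' (k:ℕ) : ℝ) := by exact_mod_cast hLk
  -- upper bound : GR ≤ α
  have hGRup : GR S' f' ≤ α := by
    set L1 : ℕ := wordLength (S' : Set (solH A)) a1H with hL1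
    set L2 : ℕ := wordLength (S' : Set (solH A)) a2H with hL2
    set Cn : ℝ := (Mα + Mβ) / (α - β) with hCn
    set Cm : ℝ := (Mα + Cn * |α - (A 0 0 : ℝ)|) / |(A 1 0 : ℝ)| with hCm
    have hCn0 : 0 ≤ Cn := div_nonneg (by linarith) hαβ.le
    have hCm0 : 0 ≤ Cm := div_nonneg (by positivity) hcabs.le
    set Creal : ℝ := Cm * L1 + Cn * L2 with hCreal
    have hCreal0 : 0 ≤ Creal := by positivity
    refine GR_le S' f' hα0 (C := max Creal 1) (le_max_right _ _) ?_
    intro k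
    have hbound : ∀ s ∈ S', (wordLength (S' : Set (solH A)) (f'^[(k:ℕ)] s) : ℝ)
        ≤ α^(k:ℕ) * Creal := by
      intro s hs
      obtain ⟨m, n, hrep⟩ := SolAux.mem_solH_repr A (f'^[(k:ℕ)] s).2
      have hEa : (m:ℝ) * (A 1 0 : ℝ) + (n:ℝ) * (α - (A 0 0:ℝ)) = α^(k:ℕ) * (να s).toAdd := by
        have := hνα_iter (k:ℕ) s
        rw [SolAux.toAdd_nuH, hrep, SolAux.nu_zpow_prod] at this
        exact this
      have hEb : (m:ℝ) * (A 1 0 : ℝ) + (n:ℝ) * (β - (A 0 0:ℝ)) = β^(k:ℕ) * (νβ s).toAdd := by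
        have := hνβ_iter (k:ℕ) s
        rw [SolAux.toAdd_nuH, hrep, SolAux.nu_zpow_prod] at this
        exact this
      have hαk1 : (1:ℝ) ≤ α^(k:ℕ) := one_le_pow₀ hα1.le
      have hβk1 : β^(k:ℕ) ≤ 1 := pow_le_one₀ hβ0.le hβ1.le
      have hβk0 : 0 ≤ β^(k:ℕ) := pow_nonneg hβ0.le _
      have hn : |(n:ℝ)| ≤ α^(k:ℕ) * Cn := by
        have hsub : (n:ℝ) * (α - β) = α^(k:ℕ) * (να s).toAdd - β^(k:ℕ) * (νβ s).toAdd := by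
          linarith
        have habs : |(n:ℝ)| * (α - β) ≤ α^(k:ℕ) * Mα + α^(k:ℕ) * Mβ := by
          have h1 : |(n:ℝ) * (α - β)| ≤ |α^(k:ℕ) * (να s).toAdd| + |β^(k:ℕ) * (νβ s).toAdd| := by
            rw [hsub]; exact abs_sub _ _
          rw [abs_mul, abs_of_pos hαβ] at h1
          rw [abs_mul, abs_mul, abs_of_pos (pow_pos hα0 _), abs_of_nonneg hβk0] at h1
          have h2 : α^(k:ℕ) * |(να s).toAdd| ≤ α^(k:ℕ) * Mα :=
            mul_le_mul_of_nonneg_left (hMα_le s hs) (by positivity)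
          have h3 : β^(k:ℕ) * |(νβ s).toAdd| ≤ α^(k:ℕ) * Mβ := by
            calc β^(k:ℕ) * |(νβ s).toAdd| ≤ 1 * Mβ := by
                  apply mul_le_mul hβk1 (hMβ_le s hs) (abs_nonneg _) zero_le_one
              _ ≤ α^(k:ℕ) * Mβ := by nlinarith
            
          linarith
        rw [hCn, ← mul_div_assoc, le_div_iff₀ hαβ]
        linarith [habs]

      have hm : |(m:ℝ)| ≤ α^(k:ℕ) * Cm := by
        have hsolve : (m:ℝ) * (A 1 0 : ℝ) = α^(k:ℕ) * (να s).toAdd - (n:ℝ) * (α - (A 0 0:ℝ)) := by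
          linarith
        have habs : |(m:ℝ)| * |(A 1 0 : ℝ)| ≤ α^(k:ℕ) * Mα + (α^(k:ℕ) * Cn) * |α - (A 0 0:ℝ)| := by
          rw [← abs_mul, hsolve]
          calc |α^(k:ℕ) * (να s).toAdd - (n:ℝ) * (α - (A 0 0:ℝ))|
              ≤ |α^(k:ℕ) * (να s).toAdd| + |(n:ℝ) * (α - (A 0 0:ℝ))| := abs_sub _ _
            _ ≤ α^(k:ℕ) * Mα + (α^(k:ℕ) * Cn) * |α - (A 0 0:ℝ)| := by
                rw [abs_mul, abs_of_pos (pow_pos hα0 _), abs_mul]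
                have := mul_le_mul_of_nonneg_right hn (abs_nonneg (α - (A 0 0:ℝ)))
                have := mul_le_mul_of_nonneg_left (hMα_le s hs)
                  (le_of_lt (pow_pos hα0 (k:ℕ)))
                linarith
        rw [hCm, ← mul_div_assoc, le_div_iff₀ hcabs]
        linarith [habs]
      -- word length bound
      have hrepH : f'^[(k:ℕ)] s = a1H ^ m * a2H ^ n := by
        apply Subtype.ext
        push_cast
        exact hrep
      have hwl1 : wordLength (S' : Set (solH A)) (f'^[(k:ℕ)] s)
          ≤ m.natAbs * L1 + n.natAbs * L2 := by
        rw [hrepH]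
        calc wordLength (S' : Set (solH A)) (a1H ^ m * a2H ^ n)
            ≤ wordLength (S' : Set (solH A)) (a1H ^ m)
              + wordLength (S' : Set (solH A)) (a2H ^ n) := wordLength_mul_le hS' _ _
          _ ≤ m.natAbs * L1 + n.natAbs * L2 := by
              have w1 := wordLength_zpow_le hS' a1H m
              have w2 := wordLength_zpow_le hS' a2H n
              rw [← hL1] at w1
              rw [← hL2] at w2
              omega
      calc (wordLength (S' : Set (solH A)) (f'^[(k:ℕ)] s) : ℝ)
          ≤ (m.natAbs : ℝ) * L1 + (n.natAbs : ℝ) * L2 := by exact_mod_cast hwl1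
        _ = |(m:ℝ)| * L1 + |(n:ℝ)| * L2 := by
            simp only [Nat.cast_natAbs, Int.cast_abs]
        _ ≤ (α^(k:ℕ) * Cm) * L1 + (α^(k:ℕ) * Cn) * L2 := by
            have : (0:ℝ) ≤ L1 := Nat.cast_nonneg _
            have : (0:ℝ) ≤ L2 := Nat.cast_nonneg _
            apply add_le_add <;> apply mul_le_mul_of_nonneg_right <;>
              first | exact hm | exact hn | positivity
        _ = α^(k:ℕ) * Creal := by rw [hCreal]; ring
    obtain ⟨smax, hsmaxS, hsmax⟩ := Finset.exists_mem_eq_sup S' hS'ne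
      (fun s => wordLength (S' : Set (solH A)) (f'^[(k:ℕ)] s))
    have : (Lk S' f' (k:ℕ) : ℝ) ≤ α^(k:ℕ) * Creal := by
      rw [Lk, hsmax]
      exact hbound smax hsmaxS
    calc (Lk S' f' (k:ℕ) : ℝ) ≤ α^(k:ℕ) * Creal := this
      _ ≤ max Creal 1 * (k:ℕ) * α^(k:ℕ) := by
          have hk1 : (1:ℝ) ≤ (k:ℕ) := by exact_mod_cast k.one_le
          have h1 : Creal ≤ max Creal 1 * (k:ℕ) := by
            calc Creal ≤ max Creal 1 := le_max_left _ _
              _ = max Creal 1 * 1 := by ring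
              _ ≤ max Creal 1 * (k:ℕ) := by
                  apply mul_le_mul_of_nonneg_left hk1
                  exact le_trans zero_le_one (le_max_right _ _)
          calc α^(k:ℕ) * Creal ≤ α^(k:ℕ) * (max Creal 1 * (k:ℕ)) :=
                mul_le_mul_of_nonneg_left h1 (by positivity)
            _ = max Creal 1 * (k:ℕ) * α^(k:ℕ) := by ring
  have hGR' : GR S' f' = α := le_antisymm hGRup hGRlow
  refine ⟨hGR', ?_⟩
  intro ψ hψ T hT
  rw [hGRθ, hGR']
  calc (1:ℝ) < α := hα1
    _ ≤ max α (GR T ⇑ψ) := le_max_left _ _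
end

section
/- Let π = ℤ × ℤ/2 with generators α = (1,0) and β = (0,1), and let φ: π → π be the endomorphism defined by φ(α) = 1 and φ(β) = β. Then GR(φ) = 1, while the restriction of φ to the finite-index subgroup ℤ × {0} has GR(φ|_{ℤ×{0}}) = 0, and the restriction of φ to the subgroup {0} × ℤ/2 has GR(φ|_{{0}×ℤ/2}) = 1. In particular, the growth rate of the restriction of an endomorphism to an invariant finite-index subgroup can be strictly smaller than the growth rate of the endomorphism. -/
open Filter Topology

section Aux

variable {G : Type*} [Group G]

lemma wordLength_one' (S : Set G) : wordLength S (1 : G) = 0 :=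
  Nat.sInf_eq_zero.mpr (Or.inl ⟨[], rfl, by simp, rfl⟩)

lemma one_le_wordLength_of_mem_closure {S : Set G} {g : G}
    (hg : g ∈ Subgroup.closure S) (hne : g ≠ 1) : 1 ≤ wordLength S g := by
  have hmem : g ∈ Submonoid.closure (S ∪ S⁻¹) := by
    rw [← Subgroup.closure_toSubmonoid]; exact hg
  obtain ⟨l, hl, hprod⟩ := Submonoid.exists_list_of_mem_closure hmem
  refine Nat.one_le_iff_ne_zero.mpr fun h0 => ?_
  rcases Nat.sInf_eq_zero.mp h0 with h | h
  · obtain ⟨w, hw0, -, hwprod⟩ := h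
    apply hne
    rw [← hwprod, List.length_eq_zero_iff.mp hw0, List.prod_nil]
  · refine Set.eq_empty_iff_forall_notMem.mp h l.length ⟨l, rfl, ?_, hprod⟩
    intro x hx
    rcases hl x hx with h' | h'
    · exact Or.inl h'
    · exact Or.inr (Set.mem_inv.mp h')

lemma iInf_const_rpow_eq_one {C : ℕ} (hC : 1 ≤ C) :
    (⨅ k : ℕ+, (C : ℝ) ^ (((k : ℕ) : ℝ))⁻¹) = 1 := by
  have hC1 : (1 : ℝ) ≤ (C : ℝ) := by exact_mod_cast hC
  have hterm : ∀ k : ℕ+, (1 : ℝ) ≤ (C : ℝ) ^ (((k : ℕ) : ℝ))⁻¹ := fun k =>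
    Real.one_le_rpow hC1 (by positivity)
  refine le_antisymm ?_ (le_ciInf hterm)
  by_contra hlt
  push_neg at hlt
  set I := ⨅ k : ℕ+, (C : ℝ) ^ (((k : ℕ) : ℝ))⁻¹ with hI
  obtain ⟨n, hn⟩ := pow_unbounded_of_one_lt (C : ℝ) hlt
  have h0I : (0 : ℝ) ≤ I := le_trans zero_le_one (le_ciInf hterm)
  have hle : I ≤ (C : ℝ) ^ ((((n + 1 : ℕ)) : ℝ))⁻¹ := by
    have := ciInf_le (f := fun k : ℕ+ => (C : ℝ) ^ (((k : ℕ) : ℝ))⁻¹)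
      ⟨1, by rintro x ⟨k, rfl⟩; exact hterm k⟩ (⟨n + 1, n.succ_pos⟩ : ℕ+)
    simpa using this
  have hpow : I ^ (n + 1) ≤ ((C : ℝ) ^ (((n + 1 : ℕ) : ℝ))⁻¹) ^ (n + 1) :=
    pow_le_pow_left₀ h0I hle _
  have heq : ((C : ℝ) ^ (((n + 1 : ℕ) : ℝ))⁻¹) ^ (n + 1) = (C : ℝ) := by
    rw [← Real.rpow_natCast ((C : ℝ) ^ (((n + 1 : ℕ) : ℝ))⁻¹) (n + 1),
      ← Real.rpow_mul (by positivity),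
      inv_mul_cancel₀ (by exact_mod_cast (Nat.succ_ne_zero n)), Real.rpow_one]
  have hfin : (C : ℝ) < I ^ (n + 1) :=
    lt_of_lt_of_le hn (pow_le_pow_right₀ hlt.le (Nat.le_succ n))
  rw [heq] at hpow
  linarith

lemma GR_eq_one_of_Lk_const (S : Finset G) (f : G → G) {C : ℕ}
    (hC : 1 ≤ C) (h : ∀ k : ℕ+, Lk S f (k : ℕ) = C) : GR S f = 1 := by
  unfold GR
  rw [iInf_congr (fun k : ℕ+ => by rw [h k])]
  exact iInf_const_rpow_eq_one hC

lemma GR_eq_zero_of_Lk_zero (S : Finset G) (f : G → G)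
    (h : ∀ k : ℕ+, Lk S f (k : ℕ) = 0) : GR S f = 0 := by
  unfold GR
  have h0 : ∀ k : ℕ+, (Lk S f (k : ℕ) : ℝ) ^ (((k : ℕ) : ℝ))⁻¹ = 0 := fun k => by
    rw [h k, Nat.cast_zero]
    exact Real.zero_rpow (by
      have : ((k : ℕ) : ℝ) ≠ 0 := by exact_mod_cast k.pos.ne'
      exact inv_ne_zero this)
  rw [iInf_congr h0, ciInf_const]

end Aux

/-- For `π = ℤ × ℤ/2` with generators `α = (1,0)`, `β = (0,1)` and the
endomorphism `φ` with `φ(α) = 1`, `φ(β) = β`: `GR(φ) = 1`, while `GR(φ|_{ℤ×{0}}) = 0`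
(a finite-index invariant subgroup, showing the restricted growth rate can be strictly
smaller) and `GR(φ|_{{0}×ℤ/2}) = 1`. -/
theorem GR_int_prod_zmod2 (φ : Multiplicative (ℤ × ZMod 2) →* Multiplicative (ℤ × ZMod 2))
    (hα : φ (Multiplicative.ofAdd ((1 : ℤ), (0 : ZMod 2))) = 1)
    (hβ : φ (Multiplicative.ofAdd ((0 : ℤ), (1 : ZMod 2))) =
      Multiplicative.ofAdd ((0 : ℤ), (1 : ZMod 2))) :
    (∀ S : Finset (Multiplicative (ℤ × ZMod 2)),
      Subgroup.closure (S : Set (Multiplicative (ℤ × ZMod 2))) = ⊤ →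
      GR S ⇑φ = 1 ∧
      (∀ N1 : Subgroup (Multiplicative (ℤ × ZMod 2)),
        N1 = AddSubgroup.toSubgroup ((⊤ : AddSubgroup ℤ).prod (⊥ : AddSubgroup (ZMod 2))) →
        N1.FiniteIndex ∧ (∀ g ∈ N1, φ g ∈ N1) ∧
        (∀ f1 : N1 → N1, (∀ x : N1, (f1 x : Multiplicative (ℤ × ZMod 2)) = φ x) →
          ∀ S1 : Finset N1, Subgroup.closure (S1 : Set N1) = ⊤ →
            GR S1 f1 = 0 ∧ GR S1 f1 < GR S ⇑φ)) ∧
      (∀ N2 : Subgroup (Multiplicative (ℤ × ZMod 2)),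
        N2 = AddSubgroup.toSubgroup ((⊥ : AddSubgroup ℤ).prod (⊤ : AddSubgroup (ZMod 2))) →
        (∀ g ∈ N2, φ g ∈ N2) ∧
        (∀ f2 : N2 → N2, (∀ x : N2, (f2 x : Multiplicative (ℤ × ZMod 2)) = φ x) →
          ∀ S2 : Finset N2, Subgroup.closure (S2 : Set N2) = ⊤ →
            GR S2 f2 = 1))) := by
  intro S hS
  -- notation
  set α : Multiplicative (ℤ × ZMod 2) := Multiplicative.ofAdd ((1 : ℤ), (0 : ZMod 2)) with hαdef
  set β : Multiplicative (ℤ × ZMod 2) := Multiplicative.ofAdd ((0 : ℤ), (1 : ZMod 2)) with hβdef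
  have hval : ∀ b : ZMod 2, ((b.val : ℕ) : ZMod 2) = b := by decide
  have hdec : ∀ (n : ℤ) (b : ZMod 2),
      Multiplicative.ofAdd (n, b) = α ^ n * β ^ (b.val) := by
    intro n b
    apply Multiplicative.toAdd.injective
    simp [hαdef, hβdef, Prod.ext_iff, hval b, nsmul_eq_mul]
  have hφ' : ∀ (n : ℤ) (b : ZMod 2),
      φ (Multiplicative.ofAdd (n, b)) = Multiplicative.ofAdd ((0 : ℤ), b) := by
    intro n b
    rw [hdec n b, map_mul, map_zpow, map_pow, hα, hβ, one_zpow, one_mul, hdec 0 b]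
    simp
  have hofAdd : ∀ x : Multiplicative (ℤ × ZMod 2),
      Multiplicative.ofAdd (x.toAdd.1, x.toAdd.2) = x := fun x => rfl
  have hφ : ∀ x : Multiplicative (ℤ × ZMod 2),
      φ x = Multiplicative.ofAdd ((0 : ℤ), x.toAdd.2) := by
    intro x
    conv_lhs => rw [← hofAdd x]
    exact hφ' _ _
  have hβne : β ≠ 1 := by
    rw [hβdef]
    intro h
    have := Multiplicative.ofAdd.injective (h.trans (ofAdd_zero).symm)
    exact one_ne_zero (congrArg Prod.snd this)
  -- some generator is not killed by φ
  have hex : ∃ s ∈ S, φ s ≠ 1 := by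
    by_contra h
    push_neg at h
    have hβmem : β ∈ Subgroup.closure (S : Set (Multiplicative (ℤ × ZMod 2))) :=
      hS ▸ Subgroup.mem_top β
    have hβ1 : φ β = 1 := by
      refine Subgroup.closure_induction (fun x hx => h x hx) (map_one φ)
        (fun x y _ _ hx hy => by rw [map_mul, hx, hy, one_mul])
        (fun x _ hx => by rw [map_inv, hx, inv_one]) hβmem
    rw [hβ] at hβ1
    exact hβne hβ1
  have hidem : ∀ x, φ (φ x) = φ x := fun x => by
    rw [hφ x]; exact hφ' 0 _
  have hiter : ∀ (m : ℕ) (x), φ^[m + 1] x = φ x := by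
    intro m
    induction m with
    | zero => intro x; exact congrFun (Function.iterate_one ⇑φ) x
    | succ m ih =>
      intro x
      rw [Function.iterate_succ_apply', ih x, hidem]
  have hLkconst : ∀ k : ℕ+, Lk S ⇑φ (k : ℕ) = Lk S ⇑φ 1 := by
    intro k
    obtain ⟨m, hm⟩ : ∃ m, (k : ℕ) = m + 1 := ⟨(k : ℕ) - 1, (Nat.succ_pred_eq_of_pos k.pos).symm⟩
    unfold Lk
    refine Finset.sup_congr rfl fun s _ => ?_
    rw [hm, hiter m s, Function.iterate_one]
  obtain ⟨s₀, hs₀S, hs₀⟩ := hex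
  have hC : 1 ≤ Lk S ⇑φ 1 := by
    calc 1 ≤ wordLength (S : Set (Multiplicative (ℤ × ZMod 2))) (φ^[1] s₀) := by
            rw [Function.iterate_one]
            exact one_le_wordLength_of_mem_closure (hS ▸ Subgroup.mem_top _) hs₀
      _ ≤ Lk S ⇑φ 1 := Finset.le_sup (f := fun s => wordLength (S : Set (Multiplicative (ℤ × ZMod 2))) ((⇑φ)^[1] s)) hs₀S
  have hGRφ : GR S ⇑φ = 1 := GR_eq_one_of_Lk_const S ⇑φ hC hLkconst
  refine ⟨hGRφ, ?_, ?_⟩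
  · -- N1 = ℤ × {0}
    intro N1 hN1
    have hmem1 : ∀ x : Multiplicative (ℤ × ZMod 2), x ∈ N1 ↔ x.toAdd.2 = 0 := by
      intro x
      rw [hN1]
      show x.toAdd ∈ (⊤ : AddSubgroup ℤ).prod ⊥ ↔ _
      simp [AddSubgroup.mem_prod]
    refine ⟨?_, ?_, ?_⟩
    · -- finite index
      rw [hN1]
      have hker : ((⊤ : AddSubgroup ℤ).prod (⊥ : AddSubgroup (ZMod 2))) =
          (AddMonoidHom.snd ℤ (ZMod 2)).ker := by
        ext x
        simp [AddSubgroup.mem_prod, AddMonoidHom.mem_ker]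
      rw [hker, ← MonoidHom.coe_toMultiplicative_ker]
      exact Subgroup.finiteIndex_ker _
    · -- invariance
      intro g hg
      rw [hmem1] at hg ⊢
      rw [hφ g, hg]
      simp
    · -- restriction has GR 0
      intro f1 hf1 S1 hS1
      have hf1' : ∀ x, f1 x = 1 := by
        intro x
        refine Subtype.ext ?_
        rw [hf1 x, hφ (x : Multiplicative (ℤ × ZMod 2)), (hmem1 _).mp x.2]
        simp
      have hLk0 : ∀ k : ℕ+, Lk S1 f1 (k : ℕ) = 0 := by
        intro k
        refine Nat.le_zero.mp (Finset.sup_le fun s _ => ?_)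
        obtain ⟨m, hm⟩ : ∃ m, (k : ℕ) = m + 1 :=
          ⟨(k : ℕ) - 1, (Nat.succ_pred_eq_of_pos k.pos).symm⟩
        rw [hm, Function.iterate_succ_apply', hf1']
        exact (wordLength_one' _).le
      have h0 : GR S1 f1 = 0 := GR_eq_zero_of_Lk_zero _ _ hLk0
      refine ⟨h0, ?_⟩
      rw [h0, hGRφ]
      norm_num
  · -- N2 = {0} × ZMod 2
    intro N2 hN2
    have hmem2 : ∀ x : Multiplicative (ℤ × ZMod 2), x ∈ N2 ↔ x.toAdd.1 = 0 := by
      intro x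
      rw [hN2]
      show x.toAdd ∈ (⊥ : AddSubgroup ℤ).prod ⊤ ↔ _
      simp [AddSubgroup.mem_prod]
    have hfix : ∀ g ∈ N2, φ g = g := by
      intro g hg
      rw [hφ g]
      conv_rhs => rw [← hofAdd g]
      rw [(hmem2 g).mp hg]
    refine ⟨fun g hg => by rw [hfix g hg]; exact hg, ?_⟩
    intro f2 hf2 S2 hS2
    have hf2' : ∀ x, f2 x = x := fun x =>
      Subtype.ext (by rw [hf2 x, hfix (x : Multiplicative (ℤ × ZMod 2)) x.2])
    have hiter2 : ∀ (m : ℕ) (x), f2^[m] x = x := by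
      intro m
      induction m with
      | zero => intro x; rfl
      | succ m ih =>
        intro x
        rw [Function.iterate_succ_apply, hf2' x, ih x]
    have hβN2 : β ∈ N2 := (hmem2 β).mpr rfl
    have hne : (⟨β, hβN2⟩ : N2) ≠ 1 := by
      intro h
      exact hβne (by simpa using congrArg Subtype.val h)
    have hexs : ∃ s ∈ S2, s ≠ (1 : N2) := by
      by_contra h
      push_neg at h
      have hmem : (⟨β, hβN2⟩ : N2) ∈ Subgroup.closure (S2 : Set N2) :=
        hS2 ▸ Subgroup.mem_top _
      have : (⟨β, hβN2⟩ : N2) = 1 := by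
        refine Subgroup.closure_induction (fun x hx => h x hx) rfl
          (fun x y _ _ hx hy => by rw [hx, hy, one_mul])
          (fun x _ hx => by rw [hx, inv_one]) hmem
      exact hne this
    have hLk2 : ∀ k : ℕ+, Lk S2 f2 (k : ℕ) = Lk S2 f2 1 := by
      intro k
      unfold Lk
      refine Finset.sup_congr rfl fun s _ => ?_
      rw [hiter2 _ s, hiter2 _ s]
    obtain ⟨s₁, hs₁S, hs₁ne⟩ := hexs
    have hC2 : 1 ≤ Lk S2 f2 1 := by
      calc 1 ≤ wordLength (S2 : Set N2) (f2^[1] s₁) := by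
              rw [Function.iterate_one, hf2']
              exact one_le_wordLength_of_mem_closure (Subgroup.subset_closure hs₁S) hs₁ne
        _ ≤ Lk S2 f2 1 := Finset.le_sup (f := fun s => wordLength (S2 : Set N2) (f2^[1] s)) hs₁S
    exact GR_eq_one_of_Lk_const _ _ hC2 hLk2
end
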